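/- Let K be a field of characteristic not 2 and s = -1 ∈ K. Consider the map x̄ = t/(x + y), ȳ = -x/y, t̄ = -t (defined for x,y,t nonzero with x + y ≠ 0). Then I₂(x,y,t) = -t²/x² + 2ty/x + 2t/y - x²/y² + 2x²/y - x² - 2xy + 2x - y² satisfies I₂(x̄,ȳ,t̄) = I₂(x,y,t) whenever both sides are defined (all relevant denominators nonzero). -/

import Mathlib

set_option maxHeartbeats 1000000 in
/-- For s = -1 (char K ≠ 2), the quantity
I₂(x,y,t) = -t²/x² + 2ty/x + 2t/y - x²/y² + 2x²/y - x² - 2xy + 2x - y²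
is invariant under x̄ = t/(x+y), ȳ = -x/y, t̄ = -t. -/
theorem qP1_integral_s_eq_neg_one {K : Type*} [Field K] (hchar : (2 : K) ≠ 0)
    (x y t : K) (hx : x ≠ 0) (hy : y ≠ 0) (ht : t ≠ 0)
    (hxy : x + y ≠ 0)
    (hx' : t / (x + y) ≠ 0) (hy' : -x / y ≠ 0) :
    (-(-t)^2 / (t / (x + y))^2 + 2*(-t)*(-x/y) / (t / (x + y)) + 2*(-t) / (-x/y)
      - (t / (x + y))^2 / (-x/y)^2 + 2*(t / (x + y))^2 / (-x/y)
      - (t / (x + y))^2 - 2*(t / (x + y))*(-x/y) + 2*(t / (x + y)) - (-x/y)^2)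
    = (-t^2 / x^2 + 2*t*y / x + 2*t / y - x^2 / y^2 + 2*x^2 / y
      - x^2 - 2*x*y + 2*x - y^2) := by

  have h1 : -(-t)^2 / (t / (x + y))^2 = -(x+y)^2 := by field_simp
  have h2 : 2*(-t)*(-x/y) / (t / (x + y)) = 2*x*(x+y)/y := by field_simp
  have h3 : 2*(-t) / (-x/y) = 2*t*y/x := by field_simp
  have h4 : (t / (x + y))^2 / (-x/y)^2 = t^2*y^2/((x+y)^2*x^2) := by
    field_simp
  have h5 : 2*(t / (x + y))^2 / (-x/y) = -(2*t^2*y/((x+y)^2*x)) := by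
    rw [div_div_eq_mul_div]; field_simp
  have h6 : 2*(t / (x + y))*(-x/y) = -(2*t*x/((x+y)*y)) := by
    field_simp
  have h7 : (t / (x + y))^2 = t^2/(x+y)^2 := div_pow t (x+y) 2
  rw [h1, h2, h3, h4, h5, h6, h7]
  clear h1 h2 h3 h4 h5 h6 h7 hx' hy'
  generalize hu : x + y = u at *
  have hu0 : u ≠ 0 := hxy
  have hu2 : u^2 ≠ 0 := pow_ne_zero 2 hu0
  have hx2 : x^2 ≠ 0 := pow_ne_zero 2 hx
  have hy2 : y^2 ≠ 0 := pow_ne_zero 2 hy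
  have D0 : u^2*x^2*y^2 ≠ 0 := mul_ne_zero (mul_ne_zero hu2 hx2) hy2
  have D1 : x^2*y^2 ≠ 0 := mul_ne_zero hx2 hy2
  have e1 : -u^2 = -(u^2*(u^2*x^2*y^2))/(u^2*x^2*y^2) := by
    rw [eq_div_iff D0]; ring
  have e2 : 2*x*u/y = (2*x*u*(u^2*x^2*y))/(u^2*x^2*y^2) := by
    rw [div_eq_div_iff hy D0]; ring
  have e3 : 2*t*y/x = (2*t*y*(u^2*x*y^2))/(u^2*x^2*y^2) := by
    rw [div_eq_div_iff hx D0]; ring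
  have e4 : t^2*y^2/(u^2*x^2) = (t^2*y^2*y^2)/(u^2*x^2*y^2) := by
    rw [div_eq_div_iff (mul_ne_zero hu2 hx2) D0]; ring
  have e5 : 2*t^2*y/(u^2*x) = (2*t^2*y*(x*y^2))/(u^2*x^2*y^2) := by
    rw [div_eq_div_iff (mul_ne_zero hu2 hx) D0]; ring
  have e6 : t^2/u^2 = (t^2*(x^2*y^2))/(u^2*x^2*y^2) := by
    rw [div_eq_div_iff hu2 D0]; ring
  have e7 : 2*t*x/(u*y) = (2*t*x*(u*x^2*y))/(u^2*x^2*y^2) := by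
    rw [div_eq_div_iff (mul_ne_zero hu0 hy) D0]; ring
  have e8 : 2*(t/u) = (2*t*(u*x^2*y^2))/(u^2*x^2*y^2) := by
    rw [mul_div_assoc', div_eq_div_iff hu0 D0]; ring
  have e9 : (-x/y)^2 = (x^2*(u^2*x^2))/(u^2*x^2*y^2) := by
    rw [div_pow, div_eq_div_iff hy2 D0]; ring
  have f1 : -t^2/x^2 = (-t^2*y^2)/(x^2*y^2) := by
    rw [div_eq_div_iff hx2 D1]; ring
  have f2 : 2*t*y/x = (2*t*y*(x*y^2))/(x^2*y^2) := by
    rw [div_eq_div_iff hx D1]; ring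
  have f3 : 2*t/y = (2*t*(x^2*y))/(x^2*y^2) := by
    rw [div_eq_div_iff hy D1]; ring
  have f4 : x^2/y^2 = (x^2*x^2)/(x^2*y^2) := by
    rw [div_eq_div_iff hy2 D1]; ring
  have f5 : 2*x^2/y = (2*x^2*(x^2*y))/(x^2*y^2) := by
    rw [div_eq_div_iff hy D1]; ring
  conv_lhs => rw [e1, e2, e3, e4, e5, e6, e7, e8, e9, ← neg_div, ← neg_div]
  conv_rhs => rw [f1, f2, f3, f4, f5]
  rw [← add_div, ← add_div, ← sub_div, ← add_div,
    ← sub_div, ← sub_div, ← add_div, ← sub_div,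
    ← add_div, ← add_div, ← sub_div, ← add_div,
    div_sub' D1, div_sub' D1, div_add' _ _ _ D1, div_sub' D1,
    div_eq_div_iff D0 D1]
  subst hu
  ring
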